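/- Under the hypotheses S = Q D Q' (Q orthogonal, D = diag(λ₁,...,λₙ)) and with P the permutation matrix of the construction, the matrix exponential of tA, where A = [[0, I], [-αS - δI, -βS - γI]], equals diag(Q,Q) · P · diag(exp(tG₁),...,exp(tGₙ)) · P' · diag(Q',Q'), where Gᵢ = [[0, 1], [-αλᵢ - δ, -βλᵢ - γ]]. -/

import Mathlib

open Matrix NormedSpace

/-- The permutation matrix `P` of the construction: row `i` (first copy) has its `1`
in column `(i,0)` (i.e. column `2i-1`), and row `n+i` (second copy) has its `1` in
column `(i,1)` (i.e. column `2i`). -/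
noncomputable def permP (n : ℕ) : Matrix (Fin n ⊕ Fin n) (Fin n × Fin 2) ℝ :=
  fun x q =>
    if q = Sum.elim (fun i => (i, (0 : Fin 2))) (fun i => (i, (1 : Fin 2))) x then 1 else 0

/-- Block diagonal matrix with 2×2 blocks `M i`. -/
noncomputable def blockDiag2 (n : ℕ) (M : Fin n → Matrix (Fin 2) (Fin 2) ℝ) :
    Matrix (Fin n × Fin 2) (Fin n × Fin 2) ℝ :=
  fun p q => if p.1 = q.1 then M p.1 p.2 q.2 else 0

/-- The equivalence underlying the permutation matrix. -/
def sigmaE (n : ℕ) : (Fin n ⊕ Fin n) ≃ (Fin n × Fin 2) where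
  toFun := Sum.elim (fun i => (i, (0 : Fin 2))) (fun i => (i, (1 : Fin 2)))
  invFun p := if p.2 = 0 then .inl p.1 else .inr p.1
  left_inv x := by cases x <;> simp
  right_inv p := by
    rcases p with ⟨i, a⟩
    fin_cases a <;> simp

theorem exp_submatrix {k m : Type*} [Fintype k] [DecidableEq k] [Fintype m] [DecidableEq m]
    (e : m ≃ k) (A : Matrix k k ℝ) :
    exp (A.submatrix e e) = (exp A).submatrix e e := by
  letI : SeminormedRing (Matrix k k ℝ) := Matrix.linftyOpSemiNormedRing
  letI : NormedRing (Matrix k k ℝ) := Matrix.linftyOpNormedRing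
  letI : NormedAlgebra ℝ (Matrix k k ℝ) := Matrix.linftyOpNormedAlgebra
  letI : NormedAlgebra ℚ (Matrix k k ℝ) := Matrix.linftyOpNormedAlgebra
  letI : SeminormedRing (Matrix m m ℝ) := Matrix.linftyOpSemiNormedRing
  letI : NormedRing (Matrix m m ℝ) := Matrix.linftyOpNormedRing
  letI : NormedAlgebra ℝ (Matrix m m ℝ) := Matrix.linftyOpNormedAlgebra
  letI : NormedAlgebra ℚ (Matrix m m ℝ) := Matrix.linftyOpNormedAlgebra
  have hc : Continuous (Matrix.reindexAlgEquiv ℝ ℝ e.symm) :=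
    LinearMap.continuous_of_finiteDimensional
      (Matrix.reindexAlgEquiv ℝ ℝ e.symm).toLinearMap
  have h := map_exp (Matrix.reindexAlgEquiv ℝ ℝ e.symm) hc A
  simp only [Matrix.reindexAlgEquiv_apply, Matrix.reindex_apply, Equiv.symm_symm] at h
  exact h.symm

theorem exp_pi_apply {ι : Type*} [Fintype ι] {k : Type*} [Fintype k] [DecidableEq k]
    (v : ι → Matrix k k ℝ) (i : ι) :
    exp v i = exp (v i) := by
  letI : SeminormedRing (Matrix k k ℝ) := Matrix.linftyOpSemiNormedRing
  letI : NormedRing (Matrix k k ℝ) := Matrix.linftyOpNormedRing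
  letI : NormedAlgebra ℝ (Matrix k k ℝ) := Matrix.linftyOpNormedAlgebra
  letI : NormedAlgebra ℚ (Matrix k k ℝ) := Matrix.linftyOpNormedAlgebra
  exact Pi.coe_exp v i

theorem blockDiag2_eq (n : ℕ) (M : Fin n → Matrix (Fin 2) (Fin 2) ℝ) :
    blockDiag2 n M = (blockDiagonal M).submatrix
      (Equiv.prodComm (Fin n) (Fin 2)) (Equiv.prodComm (Fin n) (Fin 2)) := by
  ext ⟨i, a⟩ ⟨j, b⟩
  simp [blockDiag2, Matrix.blockDiagonal_apply, eq_comm]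

theorem permP_conj (n : ℕ) (C : Matrix (Fin n × Fin 2) (Fin n × Fin 2) ℝ) :
    permP n * C * (permP n)ᵀ = C.submatrix (sigmaE n) (sigmaE n) := by
  ext x y
  have h1 : ∀ z : Fin n ⊕ Fin n, ∀ q, permP n z q = (if q = sigmaE n z then 1 else 0) := by
    intro z q; rfl
  simp only [Matrix.mul_apply, Matrix.transpose_apply, h1, Matrix.submatrix_apply]
  simp [ite_mul, mul_ite, Finset.sum_ite_eq, Finset.sum_ite_eq']

theorem stmt_8 (n : ℕ) (α β γ δ t : ℝ)
    (S Q : Matrix (Fin n) (Fin n) ℝ) (lam : Fin n → ℝ)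
    (hQ : Q * Qᵀ = 1)
    (hS : S = Q * Matrix.diagonal lam * Qᵀ) :
    NormedSpace.exp (t • fromBlocks 0 1 (-(α • S) - δ • 1) (-(β • S) - γ • 1)) =
      fromBlocks Q 0 0 Q * permP n *
        blockDiag2 n (fun i =>
          NormedSpace.exp (t • (!![0, 1; -(α * lam i) - δ, -(β * lam i) - γ] :
            Matrix (Fin 2) (Fin 2) ℝ))) *
        (permP n)ᵀ * fromBlocks Qᵀ 0 0 Qᵀ := by
  classical
  set G : Fin n → Matrix (Fin 2) (Fin 2) ℝ :=
    fun i => !![0, 1; -(α * lam i) - δ, -(β * lam i) - γ] with hG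
  set V : Matrix (Fin n ⊕ Fin n) (Fin n ⊕ Fin n) ℝ := fromBlocks Q 0 0 Q with hV
  have hQ' : Qᵀ * Q = 1 := mul_eq_one_comm.mp hQ
  have hVVt : V * Vᵀ = 1 := by
    rw [hV, Matrix.fromBlocks_transpose, Matrix.fromBlocks_multiply]
    simp [hQ, Matrix.fromBlocks_one]
  have hVtV : Vᵀ * V = 1 := by
    rw [hV, Matrix.fromBlocks_transpose, Matrix.fromBlocks_multiply]
    simp [hQ', Matrix.fromBlocks_one]
  -- the block-diagonal matrix, permuted to the sum-indexed form
  have hCsub : (blockDiag2 n (fun i => t • G i)).submatrix (sigmaE n) (sigmaE n) =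
      fromBlocks 0 (t • 1)
        (t • diagonal (fun i => -(α * lam i) - δ))
        (t • diagonal (fun i => -(β * lam i) - γ)) := by
    ext x y
    rcases x with i | i <;> rcases y with j | j <;>
      · show _ = _
        by_cases h : i = j
        · subst h
          simp [blockDiag2, sigmaE, hG, Matrix.one_apply, Matrix.diagonal_apply]
        · simp [blockDiag2, sigmaE, hG, h, Matrix.one_apply, Matrix.diagonal_apply]
  have hdiag : ∀ a b : ℝ,
      Q * diagonal (fun i => -(a * lam i) - b) * Qᵀ = -(a • S) - b • (1 : Matrix (Fin n) (Fin n) ℝ) := by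
    intro a b
    have hd : diagonal (fun i => -(a * lam i) - b) =
        -(a • diagonal lam) - b • (1 : Matrix (Fin n) (Fin n) ℝ) := by
      ext i j
      by_cases h : i = j <;> simp [Matrix.diagonal_apply, h, Matrix.one_apply, Matrix.smul_apply]
    rw [hd, Matrix.mul_sub, Matrix.sub_mul, Matrix.mul_neg, Matrix.neg_mul]
    rw [Matrix.mul_smul, Matrix.smul_mul, Matrix.mul_smul, Matrix.smul_mul, Matrix.mul_one, hQ, hS]
  -- key conjugation identity
  have key : t • fromBlocks 0 1 (-(α • S) - δ • 1) (-(β • S) - γ • 1) =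
      V * (blockDiag2 n (fun i => t • G i)).submatrix (sigmaE n) (sigmaE n) * Vᵀ := by
    rw [hCsub, hV, Matrix.fromBlocks_transpose, Matrix.fromBlocks_multiply,
      Matrix.fromBlocks_multiply]
    have h1 := hdiag α δ
    have h2 := hdiag β γ
    simp only [Matrix.transpose_zero, Matrix.mul_zero, Matrix.zero_mul, Matrix.mul_one,
      Matrix.one_mul, add_zero, zero_add, smul_zero, Matrix.mul_smul, Matrix.smul_mul]
    rw [h1, h2, hQ, Matrix.fromBlocks_smul]
    simp
  rw [key]
  have hexpB : exp (blockDiag2 n (fun i => t • G i)) =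
      blockDiag2 n (fun i => exp (t • G i)) := by
    rw [blockDiag2_eq, exp_submatrix, Matrix.exp_blockDiagonal, blockDiag2_eq]
    have hpi : exp (fun i => t • G i) = fun i => exp (t • G i) :=
      funext fun i => exp_pi_apply _ i
    rw [hpi]
  -- conjugate by the orthogonal matrix V
  have hu : exp (V * (blockDiag2 n (fun i => t • G i)).submatrix (sigmaE n) (sigmaE n) * Vᵀ) =
      V * exp ((blockDiag2 n (fun i => t • G i)).submatrix (sigmaE n) (sigmaE n)) * Vᵀ := by
    have := Matrix.exp_units_conj
      (⟨V, Vᵀ, hVVt, hVtV⟩ : (Matrix (Fin n ⊕ Fin n) (Fin n ⊕ Fin n) ℝ)ˣ)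
      ((blockDiag2 n (fun i => t • G i)).submatrix (sigmaE n) (sigmaE n))
    simpa using this
  rw [hu, exp_submatrix, hexpB, ← permP_conj]
  rw [hV, Matrix.fromBlocks_transpose]
  simp only [Matrix.transpose_zero, hG, Matrix.mul_assoc]
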